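/- Fix an integer k ≥ 1, a CDF F, and CDFs F₍₁₎,…,F₍ₖ₎ satisfying (1/k) Σ_{r=1}^{k} F₍ᵣ₎(t) = F(t) for all t. For p ∈ [0,1] define, with conventions F₍₀₎ = F₍₁₎ and F₍ₖ₊₁₎ = F₍ₖ₎, the fraction-of-neighbor-ranking CDFs F_[r] = ((1 − p)/2) F₍ᵣ₋₁₎ + p F₍ᵣ₎ + ((1 − p)/2) F₍ᵣ₊₁₎ for r = 1,…,k. Then (1/k) Σ_{r=1}^{k} F_[r](t) = F(t) for all t, i.e., the fraction of neighbor ranking model is a consistent ranking model. -/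

import Mathlib

open Finset

/-- Fix an integer `k ≥ 1`, a CDF `F`, and CDFs `F₍₁₎, …, F₍ₖ₎` satisfying
`(1/k) ∑_{r=1}^{k} F₍ᵣ₎ t = F t` for all `t`.  For `p ∈ [0,1]` define, with the
conventions `F₍₀₎ = F₍₁₎` and `F₍ₖ₊₁₎ = F₍ₖ₎`, the fraction-of-neighbor-ranking CDFs
`F_[r] = ((1 - p)/2) F₍ᵣ₋₁₎ + p F₍ᵣ₎ + ((1 - p)/2) F₍ᵣ₊₁₎` for `r = 1, …, k`.
Then `(1/k) ∑_{r=1}^{k} F_[r] t = F t` for all `t`, i.e. the fraction of neighbor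
ranking model is a consistent ranking model. -/
theorem fraction_of_neighbor_ranking_consistent
    (k : ℕ) (hk : 1 ≤ k)
    (F : ℝ → ℝ) (Fos : ℕ → ℝ → ℝ)
    (hcons : ∀ t, (1 / (k : ℝ)) * ∑ r ∈ Finset.Icc 1 k, Fos r t = F t)
    (h0 : ∀ t, Fos 0 t = Fos 1 t) (hk1 : ∀ t, Fos (k + 1) t = Fos k t)
    (p : ℝ) (hp : p ∈ Set.Icc (0 : ℝ) 1)
    (Fb : ℕ → ℝ → ℝ)
    (hFb : ∀ r ∈ Finset.Icc 1 k, ∀ t,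
      Fb r t = ((1 - p) / 2) * Fos (r - 1) t + p * Fos r t + ((1 - p) / 2) * Fos (r + 1) t) :
    ∀ t, (1 / (k : ℝ)) * ∑ r ∈ Finset.Icc 1 k, Fb r t = F t := by
  intro t
  have key : ∑ r ∈ Finset.Icc 1 k, Fb r t = ∑ r ∈ Finset.Icc 1 k, Fos r t := by
    rw [Finset.sum_congr rfl (fun r hr => hFb r hr t)]
    set f : ℕ → ℝ := fun i => Fos i t with hf
    have h1 : ∑ r ∈ Finset.Icc 1 k, f (r - 1) = ∑ i ∈ Finset.range k, f i := by
      rw [← Finset.Ico_add_one_right_eq_Icc, Finset.sum_Ico_eq_sum_range]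
      simp
    have h2 : ∑ r ∈ Finset.Icc 1 k, f r = ∑ i ∈ Finset.range k, f (i + 1) := by
      rw [← Finset.Ico_add_one_right_eq_Icc, Finset.sum_Ico_eq_sum_range]
      simp [add_comm]
    have h3 : ∑ r ∈ Finset.Icc 1 k, f (r + 1) = ∑ i ∈ Finset.range k, f (i + 2) := by
      rw [← Finset.Ico_add_one_right_eq_Icc, Finset.sum_Ico_eq_sum_range]
      apply Finset.sum_congr rfl
      intro i _
      congr 1
      omega
    have t1 : ∑ i ∈ Finset.range k, f i - ∑ i ∈ Finset.range k, f (i + 1)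
        = f 0 - f k := by
      rw [← Finset.sum_sub_distrib]
      exact Finset.sum_range_sub' f k
    have t2 : ∑ i ∈ Finset.range k, f (i + 2) - ∑ i ∈ Finset.range k, f (i + 1)
        = f (k + 1) - f 1 := by
      rw [← Finset.sum_sub_distrib]
      exact Finset.sum_range_sub (fun i => f (i + 1)) k
    have h0' : f 0 = f 1 := h0 t
    have hk1' : f (k + 1) = f k := hk1 t
    have hAB : (∑ i ∈ Finset.range k, f i) + (∑ i ∈ Finset.range k, f (i + 2))
        = 2 * ∑ i ∈ Finset.range k, f (i + 1) := by linarith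
    have h1' : ∑ r ∈ Finset.Icc 1 k, Fos (r - 1) t = ∑ i ∈ Finset.range k, f i := h1
    have h2' : ∑ r ∈ Finset.Icc 1 k, Fos r t = ∑ i ∈ Finset.range k, f (i + 1) := h2
    have h3' : ∑ r ∈ Finset.Icc 1 k, Fos (r + 1) t = ∑ i ∈ Finset.range k, f (i + 2) := h3
    simp only [Finset.sum_add_distrib, ← Finset.mul_sum, h1', h2', h3', h2]
    linear_combination ((1 - p) / 2) * hAB
  rw [key, hcons]
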